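/- Let V be a 3×3 real orthogonal matrix (VᵀV = I) and set A := V·diag(1, −1, −1)·Vᵀ. Let S : ℝ → ℝ³ be a differentiable function with ‖S(x)‖ = 1 for all x, and set S̃(x) := A·S(x). Then for every x, S̃ × (S × S′) + S × (S̃ × S̃′) = (S + S̃)′, where × is the standard cross product on ℝ³ and ′ is the derivative in x. Consequently the term M₀ in the deformed Heisenberg ferromagnet model is local: M₀ = −a(S + S̃) satisfies M₀′ = −a·(S̃ × (S × S′) + S × (S̃ × S̃′)). -/

import Mathlib

open Matrix

/-- Cross-product identity: for `s̃ = 2(w·s)w − s` and `s̃′ = 2(w·t)w − t`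
with `s·s = 1` and `s·t = 0`, one has
`s̃ × (s × t) + s × (s̃ × s̃′) = t + s̃′`. -/
lemma ferromagnet_cross_key (s t w : Fin 3 → ℝ) (hn : s ⬝ᵥ s = 1) (ho : s ⬝ᵥ t = 0) :
    crossProduct ((2 * (w ⬝ᵥ s)) • w - s) (crossProduct s t) +
      crossProduct s (crossProduct ((2 * (w ⬝ᵥ s)) • w - s) ((2 * (w ⬝ᵥ t)) • w - t)) =
    t + ((2 * (w ⬝ᵥ t)) • w - t) := by
  simp only [dotProduct, Fin.sum_univ_three] at hn ho ⊢
  funext i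
  fin_cases i <;>
    · simp [cross_apply, Fin.sum_univ_three]
      first
      | linear_combination (2 * w 0 * (w 0 * t 0 + w 1 * t 1 + w 2 * t 2)) * hn
          - (2 * w 0 * (w 0 * s 0 + w 1 * s 1 + w 2 * s 2)) * ho
      | linear_combination (2 * w 1 * (w 0 * t 0 + w 1 * t 1 + w 2 * t 2)) * hn
          - (2 * w 1 * (w 0 * s 0 + w 1 * s 1 + w 2 * s 2)) * ho
      | linear_combination (2 * w 2 * (w 0 * t 0 + w 1 * t 1 + w 2 * t 2)) * hn
          - (2 * w 2 * (w 0 * s 0 + w 1 * s 1 + w 2 * s 2)) * ho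

/-- For `A = V·diag(1,−1,−1)·Vᵀ` with `V` orthogonal, `S̃ = A·S` and `S` of
unit Euclidean norm, one has `S̃ × (S × S′) + S × (S̃ × S̃′) = (S + S̃)′`;
consequently `M₀ = −a(S + S̃)` is local and satisfies
`M₀′ = −a·(S̃ × (S × S′) + S × (S̃ × S̃′))`. -/
theorem ferromagnet_M0_local
    (V : Matrix (Fin 3) (Fin 3) ℝ) (hV : Vᵀ * V = 1)
    (A : Matrix (Fin 3) (Fin 3) ℝ)
    (hA : A = V * Matrix.diagonal ![1, -1, -1] * Vᵀ)
    (S St : ℝ → Fin 3 → ℝ)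
    (hS : Differentiable ℝ S)
    (hnorm : ∀ x : ℝ, S x ⬝ᵥ S x = 1)
    (hSt : ∀ x : ℝ, St x = A.mulVec (S x))
    (a : ℝ) (M₀ : ℝ → Fin 3 → ℝ)
    (hM₀ : ∀ x : ℝ, M₀ x = (-a) • (S x + St x)) :
    ∀ x : ℝ,
      crossProduct (St x) (crossProduct (S x) (deriv S x)) +
          crossProduct (S x) (crossProduct (St x) (deriv St x)) =
        deriv (fun y => S y + St y) x ∧
      deriv M₀ x =
        (-a) • (crossProduct (St x) (crossProduct (S x) (deriv S x)) +
          crossProduct (S x) (crossProduct (St x) (deriv St x))) := by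
  set v : Fin 3 → ℝ := fun i => V i 0 with hv
  have hVVt : V * Vᵀ = 1 := mul_eq_one_comm.mp hV
  have hAij : ∀ i j, A i j = 2 * v i * v j - (1 : Matrix (Fin 3) (Fin 3) ℝ) i j := by
    intro i j
    have h := congrFun (congrFun hVVt i) j
    simp only [Matrix.mul_apply, Matrix.transpose_apply, Fin.sum_univ_three] at h
    subst hA
    simp [Matrix.mul_apply, Matrix.transpose_apply, Fin.sum_univ_three,
      Matrix.diagonal_apply, hv]
    linear_combination -h
  have hSt2 : ∀ y, St y = (2 * (v ⬝ᵥ S y)) • v - S y := by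
    intro y; funext i
    rw [hSt]
    fin_cases i <;>
      simp [Matrix.mulVec, dotProduct, Fin.sum_univ_three, hAij, Matrix.one_apply] <;>
      ring
  have hStfun : St = fun t => (2 * (v ⬝ᵥ S t)) • v - S t := funext hSt2
  have hcomp : ∀ (i : Fin 3) (y : ℝ), HasDerivAt (fun t => S t i) (deriv S y i) y :=
    fun i y => (ContinuousLinearMap.proj i :
      (Fin 3 → ℝ) →L[ℝ] ℝ).hasFDerivAt.comp_hasDerivAt y (hS y).hasDerivAt
  have hf : ∀ y, HasDerivAt (fun t => v ⬝ᵥ S t) (v ⬝ᵥ deriv S y) y := by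
    intro y
    simp only [dotProduct]
    exact HasDerivAt.fun_sum fun i _ => (hcomp i y).const_mul (v i)
  have hSt' : ∀ y, HasDerivAt St ((2 * (v ⬝ᵥ deriv S y)) • v - deriv S y) y := by
    intro y
    rw [hStfun]
    exact (((hf y).const_mul 2).smul_const v).sub (hS y).hasDerivAt
  have hSS' : ∀ y, S y ⬝ᵥ deriv S y = 0 := by
    intro y
    have hg : HasDerivAt (fun t => S t ⬝ᵥ S t)
        (∑ i : Fin 3, (deriv S y i * S y i + S y i * deriv S y i)) y := by
      simp only [dotProduct]
      exact HasDerivAt.fun_sum fun i _ => (hcomp i y).mul (hcomp i y)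
    have hconst : (fun t => S t ⬝ᵥ S t) = fun _ => (1 : ℝ) := funext hnorm
    have hd := hg.deriv
    rw [hconst, deriv_const] at hd
    simp only [dotProduct, Fin.sum_univ_three] at hd ⊢
    linarith [hd]
  intro x
  have hdS : deriv St x = (2 * (v ⬝ᵥ deriv S x)) • v - deriv S x := (hSt' x).deriv
  have hdsum : deriv (fun y => S y + St y) x =
      deriv S x + ((2 * (v ⬝ᵥ deriv S x)) • v - deriv S x) :=
    ((hS x).hasDerivAt.add (hSt' x)).deriv
  have key : crossProduct (St x) (crossProduct (S x) (deriv S x)) +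
      crossProduct (S x) (crossProduct (St x) (deriv St x)) =
      deriv (fun y => S y + St y) x := by
    rw [hdsum, hdS, hSt2 x]
    exact ferromagnet_cross_key (S x) (deriv S x) v (hnorm x) (hSS' x)
  refine ⟨key, ?_⟩
  rw [key]
  have hM : M₀ = fun y => (-a) • (S y + St y) := funext hM₀
  have hM' : HasDerivAt M₀
      ((-a) • (deriv S x + ((2 * (v ⬝ᵥ deriv S x)) • v - deriv S x))) x := by
    rw [hM]
    exact ((hS x).hasDerivAt.add (hSt' x)).const_smul (-a)
  rw [hM'.deriv, hdsum]
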